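/- Let A and B be nonnegative n×n matrices and α ≥ 1/2. Then ‖A^(α) ∘ B^(α)‖ ≤ r((AᵀB)^(α) ∘ (BᵀA)^(α))^{1/2} ≤ r((AᵀB)^(α) ∘ (AᵀB)^(α))^{1/2} ≤ r(AᵀB)^α, where ‖·‖ is the operator norm on ℓ², r the spectral radius, ∘ the Hadamard product, and X^(α) the entrywise α-power. -/

import Mathlib

open scoped ENNReal
open Finset Matrix
noncomputable def specRad {n : ℕ} (A : Matrix (Fin n) (Fin n) ℝ) : ℝ≥0∞ :=
  spectralRadius ℂ (A.map (algebraMap ℝ ℂ))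
noncomputable def opNorm {n : ℕ} (A : Matrix (Fin n) (Fin n) ℝ) : ℝ :=
  ‖Matrix.toEuclideanCLM (𝕜 := ℝ) A‖

open scoped Topology NNReal
open Filter

set_option maxHeartbeats 1000000

section helpers

attribute [local instance] Matrix.frobeniusSeminormedAddCommGroup
  Matrix.frobeniusNormedAddCommGroup Matrix.frobeniusNormedSpace
  Matrix.frobeniusNormedRing Matrix.frobeniusNormedAlgebra

variable {n : ℕ}

example : CompleteSpace (Matrix (Fin n) (Fin n) ℂ) := by infer_instance

theorem specRad_tendsto (M : Matrix (Fin n) (Fin n) ℝ) :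
    Tendsto (fun k : ℕ => (‖M ^ k‖₊ : ℝ≥0∞) ^ (1 / k : ℝ)) atTop (𝓝 (specRad M)) := by
  have key : ∀ k : ℕ, ‖(M.map (algebraMap ℝ ℂ)) ^ k‖₊ = ‖M ^ k‖₊ := by
    intro k
    rw [← RingHom.mapMatrix_apply, ← map_pow, RingHom.mapMatrix_apply]
    exact Matrix.frobenius_nnnorm_map_eq _ _ (fun a => by simp)
  simpa only [key, specRad] using
    spectrum.pow_nnnorm_pow_one_div_tendsto_nhds_spectralRadius (M.map (algebraMap ℝ ℂ))

/-- master limit comparison -/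
theorem specRad_le_of_norm_le {M : Matrix (Fin n) (Fin n) ℝ} {u : ℕ → ℝ≥0∞} {L : ℝ≥0∞}
    (h : ∀ k, 1 ≤ k → (‖M ^ k‖₊ : ℝ≥0∞) ≤ u k)
    (hu : Tendsto (fun k : ℕ => u k ^ (1 / k : ℝ)) atTop (𝓝 L)) :
    specRad M ≤ L :=
  le_of_tendsto_of_tendsto (specRad_tendsto M) hu
    (eventually_atTop.mpr ⟨1, fun k hk =>
      ENNReal.rpow_le_rpow (h k hk) (by positivity)⟩)

section entrywise
variable {M N P Q : Matrix (Fin n) (Fin n) ℝ}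

theorem mul_nonneg_entry (hM : ∀ i j, 0 ≤ M i j) (hN : ∀ i j, 0 ≤ N i j) :
    ∀ i j, 0 ≤ (M * N) i j := fun i j => by
  rw [Matrix.mul_apply]
  exact Finset.sum_nonneg fun k _ => mul_nonneg (hM i k) (hN k j)

theorem pow_nonneg_entry (hM : ∀ i j, 0 ≤ M i j) (k : ℕ) (hk : 1 ≤ k) :
    ∀ i j, 0 ≤ (M ^ k) i j := by
  induction k with
  | zero => omega
  | succ k ih =>
    rcases Nat.eq_zero_or_pos k with rfl | hk'
    · simpa using hM
    · rw [pow_succ]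
      exact mul_nonneg_entry (ih hk') hM

theorem mul_le_entry (hM : ∀ i j, 0 ≤ M i j) (hN : ∀ i j, 0 ≤ N i j)
    (h1 : ∀ i j, M i j ≤ P i j) (h2 : ∀ i j, N i j ≤ Q i j) :
    ∀ i j, (M * N) i j ≤ (P * Q) i j := fun i j => by
  rw [Matrix.mul_apply, Matrix.mul_apply]
  exact Finset.sum_le_sum fun k _ =>
    mul_le_mul (h1 i k) (h2 k j) (hN k j) ((hM i k).trans (h1 i k))

theorem pow_le_entry (hM : ∀ i j, 0 ≤ M i j) (h1 : ∀ i j, M i j ≤ N i j)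
    (k : ℕ) (hk : 1 ≤ k) : ∀ i j, (M ^ k) i j ≤ (N ^ k) i j := by
  induction k with
  | zero => omega
  | succ k ih =>
    rcases Nat.eq_zero_or_pos k with rfl | hk'
    · simpa using h1
    · rw [pow_succ, pow_succ]
      exact mul_le_entry (pow_nonneg_entry hM k hk') hM (ih hk') h1

/-- Frobenius norm is entrywise monotone on nonnegative matrices. -/
theorem frob_mono (hM : ∀ i j, 0 ≤ M i j) (h1 : ∀ i j, M i j ≤ N i j) : ‖M‖₊ ≤ ‖N‖₊ := by
  rw [Matrix.frobenius_nnnorm_def, Matrix.frobenius_nnnorm_def]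
  refine NNReal.rpow_le_rpow ?_ (by norm_num)
  refine Finset.sum_le_sum fun i _ => Finset.sum_le_sum fun j _ => ?_
  refine NNReal.rpow_le_rpow ?_ (by norm_num)
  rw [← NNReal.coe_le_coe]
  simp only [coe_nnnorm, Real.norm_eq_abs]
  rw [abs_of_nonneg (hM i j), abs_of_nonneg ((hM i j).trans (h1 i j))]
  exact h1 i j

theorem specRad_mono (hM : ∀ i j, 0 ≤ M i j) (h1 : ∀ i j, M i j ≤ N i j) :
    specRad M ≤ specRad N := by
  refine specRad_le_of_norm_le (u := fun k => (‖N ^ k‖₊ : ℝ≥0∞))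
    (fun k hk => ?_) (specRad_tendsto N)
  show (‖M ^ k‖₊ : ℝ≥0∞) ≤ (‖N ^ k‖₊ : ℝ≥0∞)
  exact_mod_cast frob_mono (pow_nonneg_entry hM k hk) (pow_le_entry hM h1 k hk)

theorem specRad_transpose (M : Matrix (Fin n) (Fin n) ℝ) : specRad Mᵀ = specRad M := by
  refine tendsto_nhds_unique ?_ (specRad_tendsto M)
  have : ∀ k : ℕ, ‖Mᵀ ^ k‖₊ = ‖M ^ k‖₊ := fun k => by
    rw [← Matrix.transpose_pow, Matrix.frobenius_nnnorm_transpose]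
  simpa only [this] using specRad_tendsto Mᵀ

end entrywise

section realhelpers

theorem rpow_add_le_my (a b : ℝ) {p : ℝ} (ha : 0 ≤ a) (hb : 0 ≤ b) (hp : 1 ≤ p) :
    a ^ p + b ^ p ≤ (a + b) ^ p := by
  have h := NNReal.add_rpow_le_rpow_add a.toNNReal b.toNNReal hp
  rw [← NNReal.coe_le_coe] at h
  push_cast at h
  rwa [Real.coe_toNNReal a ha, Real.coe_toNNReal b hb] at h

theorem sum_rpow_le_my {ι : Type*} (s : Finset ι) (f : ι → ℝ) {p : ℝ}
    (hf : ∀ i ∈ s, 0 ≤ f i) (hp : 1 ≤ p) :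
    ∑ i ∈ s, f i ^ p ≤ (∑ i ∈ s, f i) ^ p := by
  induction s using Finset.cons_induction with
  | empty => simp [Real.zero_rpow (by linarith : p ≠ 0)]
  | cons a s ha ih =>
    rw [Finset.sum_cons, Finset.sum_cons]
    have h1 : 0 ≤ f a := hf a (Finset.mem_cons_self a s)
    have h2 : ∀ i ∈ s, 0 ≤ f i := fun i hi => hf i (Finset.mem_cons.mpr (Or.inr hi))
    calc f a ^ p + ∑ i ∈ s, f i ^ p ≤ f a ^ p + (∑ i ∈ s, f i) ^ p := by
          exact add_le_add le_rfl (ih h2)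
      _ ≤ (f a + ∑ i ∈ s, f i) ^ p :=
          rpow_add_le_my _ _ h1 (Finset.sum_nonneg h2) hp

end realhelpers

section frobsq
theorem sum_prod_eq (f : Fin n → Fin n → ℝ) :
    ∑ p : Fin n × Fin n, f p.1 p.2 = ∑ i, ∑ j, f i j := by
  rw [← Finset.univ_product_univ, Finset.sum_product]


variable {M N S T : Matrix (Fin n) (Fin n) ℝ}

theorem frob_eq_sqrt (hM : ∀ i j, 0 ≤ M i j) :
    ‖M‖ = Real.sqrt (∑ i, ∑ j, M i j ^ 2) := by
  rw [Matrix.frobenius_norm_def, Real.sqrt_eq_rpow]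
  congr 1
  refine Finset.sum_congr rfl fun i _ => Finset.sum_congr rfl fun j _ => ?_
  rw [Real.norm_eq_abs, abs_of_nonneg (hM i j), Real.rpow_two]

theorem frob_sq (hM : ∀ i j, 0 ≤ M i j) : ‖M‖ ^ 2 = ∑ i, ∑ j, M i j ^ 2 := by
  rw [frob_eq_sqrt hM, Real.sq_sqrt (by positivity)]

/-- Cauchy-Schwarz for Frobenius norms -/
theorem frob_cs (hM : ∀ i j, 0 ≤ M i j) (hS : ∀ i j, 0 ≤ S i j) (hT : ∀ i j, 0 ≤ T i j)
    (h : ∀ i j, M i j ^ 2 ≤ S i j * T i j) : ‖M‖ ^ 2 ≤ ‖S‖ * ‖T‖ := by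
  rw [frob_sq hM, frob_eq_sqrt hS, frob_eq_sqrt hT]
  calc ∑ i, ∑ j, M i j ^ 2 ≤ ∑ i, ∑ j, S i j * T i j :=
        Finset.sum_le_sum fun i _ => Finset.sum_le_sum fun j _ => h i j
    _ = ∑ p : Fin n × Fin n, S p.1 p.2 * T p.1 p.2 :=
        (sum_prod_eq _).symm
    _ ≤ Real.sqrt (∑ p : Fin n × Fin n, S p.1 p.2 ^ 2) *
        Real.sqrt (∑ p : Fin n × Fin n, T p.1 p.2 ^ 2) :=
        Real.sum_mul_le_sqrt_mul_sqrt _ _ _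
    _ = Real.sqrt (∑ i, ∑ j, S i j ^ 2) * Real.sqrt (∑ i, ∑ j, T i j ^ 2) := by
        rw [sum_prod_eq fun i j => S i j ^ 2, sum_prod_eq fun i j => T i j ^ 2]

/-- entrywise power bound on Frobenius norm -/
theorem frob_rpow (hM : ∀ i j, 0 ≤ M i j) (hN : ∀ i j, 0 ≤ N i j) {p : ℝ} (hp : 1 ≤ p)
    (h : ∀ i j, M i j ≤ N i j ^ p) : ‖M‖ ≤ ‖N‖ ^ p := by
  have hNn : (0:ℝ) ≤ ‖N‖ := norm_nonneg _
  have key : ‖M‖ ^ 2 ≤ (‖N‖ ^ p) ^ 2 := by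
    have e1 : (‖N‖ ^ p) ^ 2 = (‖N‖ ^ 2) ^ p := by
      rw [← Real.rpow_two (‖N‖ ^ p), ← Real.rpow_mul hNn, mul_comm,
        Real.rpow_mul hNn, Real.rpow_two]
    rw [frob_sq hM, e1, frob_sq hN]
    calc ∑ i, ∑ j, M i j ^ 2 ≤ ∑ i, ∑ j, (N i j ^ 2) ^ p := by
          refine Finset.sum_le_sum fun i _ => Finset.sum_le_sum fun j _ => ?_
          have : M i j ^ 2 ≤ (N i j ^ p) ^ 2 :=
            pow_le_pow_left₀ (hM i j) (h i j) 2
          refine this.trans_eq ?_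
          rw [← Real.rpow_two (N i j ^ p), ← Real.rpow_mul (hN i j), mul_comm,
            Real.rpow_mul (hN i j), Real.rpow_two]
      _ = ∑ p' : Fin n × Fin n, (N p'.1 p'.2 ^ 2) ^ p :=
          (sum_prod_eq fun i j => (N i j ^ 2) ^ p).symm
      _ ≤ (∑ p' : Fin n × Fin n, N p'.1 p'.2 ^ 2) ^ p := by
          refine sum_rpow_le_my _ _ (fun q _ => by positivity) hp
      _ = (∑ i, ∑ j, N i j ^ 2) ^ p := by rw [sum_prod_eq fun i j => N i j ^ 2]
  nlinarith [norm_nonneg M, Real.rpow_nonneg hNn p]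

end frobsq

theorem specRad_ne_top (M : Matrix (Fin n) (Fin n) ℝ) : specRad M ≠ ⊤ := by
  have h := spectrum.spectralRadius_le_pow_nnnorm_pow_one_div ℂ
    (M.map (algebraMap ℝ ℂ)) 0
  refine ne_top_of_le_ne_top ?_ h
  exact ENNReal.mul_ne_top
    (ENNReal.rpow_ne_top_of_nonneg (by norm_num) ENNReal.coe_ne_top)
    (ENNReal.rpow_ne_top_of_nonneg (by norm_num) ENNReal.coe_ne_top)

theorem enn_le_rpow_half {x y : ℝ≥0∞} (h : x * x ≤ y) : x ≤ y ^ (1/2 : ℝ) := by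
  have h2 : x ^ (2:ℝ) ≤ y := by rw [ENNReal.rpow_two, sq]; exact h
  calc x = (x ^ (2:ℝ)) ^ (1/2:ℝ) := by rw [← ENNReal.rpow_mul]; norm_num
    _ ≤ y ^ (1/2:ℝ) := ENNReal.rpow_le_rpow h2 (by norm_num)

/-- Step 3 core: entrywise `p`-th power, `p ≥ 1`. -/
theorem specRad_entry_rpow_le {C : Matrix (Fin n) (Fin n) ℝ} (hC : ∀ i j, 0 ≤ C i j)
    {p : ℝ} (hp : 1 ≤ p) :
    specRad (Matrix.of fun i j => C i j ^ p) ≤ specRad C ^ p := by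
  set Cp : Matrix (Fin n) (Fin n) ℝ := Matrix.of fun i j => C i j ^ p with hCp_def
  have hCp : ∀ i j, 0 ≤ Cp i j := fun i j => Real.rpow_nonneg (hC i j) p
  have claim : ∀ k, 1 ≤ k → ∀ i j, (Cp ^ k) i j ≤ ((C ^ k) i j) ^ p := by
    intro k
    induction k with
    | zero => omega
    | succ k ih =>
      intro _
      rcases Nat.eq_zero_or_pos k with rfl | hk'
      · intro i j
        simp only [zero_add, pow_one]
        exact le_of_eq rfl
      · intro i j
        rw [pow_succ, pow_succ, Matrix.mul_apply, Matrix.mul_apply]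
        calc ∑ l, (Cp ^ k) i l * Cp l j
            ≤ ∑ l, ((C ^ k) i l) ^ p * (C l j) ^ p := by
              refine Finset.sum_le_sum fun l _ => ?_
              exact mul_le_mul (ih hk' i l) le_rfl (hCp l j)
                (Real.rpow_nonneg (pow_nonneg_entry hC k hk' i l) p)
          _ = ∑ l, ((C ^ k) i l * C l j) ^ p := by
              refine Finset.sum_congr rfl fun l _ => ?_
              rw [Real.mul_rpow (pow_nonneg_entry hC k hk' i l) (hC l j)]
          _ ≤ (∑ l, (C ^ k) i l * C l j) ^ p :=
              sum_rpow_le_my _ _ (fun l _ =>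
                mul_nonneg (pow_nonneg_entry hC k hk' i l) (hC l j)) hp
  have hnorm : ∀ k, 1 ≤ k → (‖Cp ^ k‖₊ : ℝ≥0∞) ≤ ((‖C ^ k‖₊ : ℝ≥0∞)) ^ p := by
    intro k hk
    have hreal : ‖Cp ^ k‖ ≤ ‖C ^ k‖ ^ p :=
      frob_rpow (pow_nonneg_entry hCp k hk) (pow_nonneg_entry hC k hk) hp (claim k hk)
    have hnn : ‖Cp ^ k‖₊ ≤ ‖C ^ k‖₊ ^ p := by
      rw [← NNReal.coe_le_coe, NNReal.coe_rpow, coe_nnnorm, coe_nnnorm]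
      exact hreal
    calc (‖Cp ^ k‖₊ : ℝ≥0∞) ≤ ((‖C ^ k‖₊ ^ p : ℝ≥0) : ℝ≥0∞) := ENNReal.coe_le_coe.mpr hnn
      _ = (‖C ^ k‖₊ : ℝ≥0∞) ^ p := ENNReal.coe_rpow_of_nonneg _ (by linarith : (0:ℝ) ≤ p)
  refine specRad_le_of_norm_le hnorm ?_
  have h2 : Tendsto (fun k : ℕ => ((‖C ^ k‖₊ : ℝ≥0∞) ^ (1/k : ℝ)) ^ p) atTop
      (𝓝 (specRad C ^ p)) :=
    (ENNReal.continuous_rpow_const.tendsto _).comp (specRad_tendsto C)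
  have heq : (fun k : ℕ => ((‖C ^ k‖₊ : ℝ≥0∞) ^ p) ^ (1/k : ℝ)) =
      fun k : ℕ => ((‖C ^ k‖₊ : ℝ≥0∞) ^ (1/k : ℝ)) ^ p := by
    funext k
    rw [← ENNReal.rpow_mul, ← ENNReal.rpow_mul, mul_comm]
  rw [heq]
  exact h2

/-- Step 2 core: `r(X ∘ Xᵀ) ≤ r(X ∘ X)` for entrywise nonnegative `X`. -/
theorem specRad_hadamard_transpose_le {X : Matrix (Fin n) (Fin n) ℝ}
    (hX : ∀ i j, 0 ≤ X i j) :
    specRad (Matrix.of fun i j => X i j * X j i) ≤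
      specRad (Matrix.of fun i j => X i j * X i j) := by
  set G : Matrix (Fin n) (Fin n) ℝ := Matrix.of fun i j => X i j * X j i with hG_def
  set S : Matrix (Fin n) (Fin n) ℝ := Matrix.of fun i j => X i j * X i j with hS_def
  set T : Matrix (Fin n) (Fin n) ℝ := Sᵀ with hT_def
  have hG : ∀ i j, 0 ≤ G i j := fun i j => mul_nonneg (hX i j) (hX j i)
  have hS : ∀ i j, 0 ≤ S i j := fun i j => mul_nonneg (hX i j) (hX i j)
  have hT : ∀ i j, 0 ≤ T i j := fun i j => hS j i
  have claim : ∀ k, 1 ≤ k → ∀ i j, (G ^ k) i j ^ 2 ≤ (S ^ k) i j * (T ^ k) i j := by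
    intro k
    induction k with
    | zero => omega
    | succ k ih =>
      intro _
      rcases Nat.eq_zero_or_pos k with rfl | hk'
      · intro i j
        simp only [zero_add, pow_one]
        show (X i j * X j i) ^ 2 ≤ (X i j * X i j) * (X j i * X j i)
        exact le_of_eq (by ring)
      · intro i j
        have hGk : (G ^ (k+1)) i j = ∑ l, (G ^ k) i l * G l j := by
          rw [pow_succ, Matrix.mul_apply]
        have hSk : (S ^ (k+1)) i j = ∑ l, (S ^ k) i l * S l j := by
          rw [pow_succ, Matrix.mul_apply]
        have hTk : (T ^ (k+1)) i j = ∑ l, (T ^ k) i l * T l j := by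
          rw [pow_succ, Matrix.mul_apply]
        rw [hGk, hSk, hTk]
        set f : Fin n → ℝ := fun l => (S ^ k) i l * S l j with hf_def
        set g : Fin n → ℝ := fun l => (T ^ k) i l * T l j with hg_def
        have hfl : ∀ l, 0 ≤ f l := fun l =>
          mul_nonneg (pow_nonneg_entry hS k hk' i l) (hS l j)
        have hgl : ∀ l, 0 ≤ g l := fun l =>
          mul_nonneg (pow_nonneg_entry hT k hk' i l) (hT l j)
        have hrl : ∀ l, 0 ≤ (G ^ k) i l * G l j := fun l =>
          mul_nonneg (pow_nonneg_entry hG k hk' i l) (hG l j)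
        have key : ∀ l, (G ^ k) i l * G l j ≤ Real.sqrt (f l) * Real.sqrt (g l) := by
          intro l
          have h1 : ((G ^ k) i l * G l j) ^ 2 ≤ f l * g l := by
            have e1 : ((G ^ k) i l * G l j) ^ 2 = (G ^ k) i l ^ 2 * G l j ^ 2 := by ring
            have e2 : G l j ^ 2 = S l j * T l j := by
              show (X l j * X j l) ^ 2 = (X l j * X l j) * (X j l * X j l)
              ring
            rw [e1, e2]
            calc (G ^ k) i l ^ 2 * (S l j * T l j)
                ≤ (S ^ k) i l * (T ^ k) i l * (S l j * T l j) := by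
                  refine mul_le_mul_of_nonneg_right (ih hk' i l) ?_
                  exact mul_nonneg (hS l j) (hT l j)
              _ = f l * g l := by rw [hf_def, hg_def]; ring
          calc (G ^ k) i l * G l j = Real.sqrt (((G ^ k) i l * G l j) ^ 2) :=
                (Real.sqrt_sq (hrl l)).symm
            _ ≤ Real.sqrt (f l * g l) := Real.sqrt_le_sqrt h1
            _ = Real.sqrt (f l) * Real.sqrt (g l) := Real.sqrt_mul (hfl l) _
        calc (∑ l, (G ^ k) i l * G l j) ^ 2
            ≤ (∑ l, Real.sqrt (f l) * Real.sqrt (g l)) ^ 2 := by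
              refine pow_le_pow_left₀ (Finset.sum_nonneg fun l _ => hrl l)
                (Finset.sum_le_sum fun l _ => key l) 2
          _ ≤ (Real.sqrt (∑ l, f l) * Real.sqrt (∑ l, g l)) ^ 2 := by
              refine pow_le_pow_left₀ (Finset.sum_nonneg fun l _ =>
                mul_nonneg (Real.sqrt_nonneg _) (Real.sqrt_nonneg _)) ?_ 2
              exact Real.sum_sqrt_mul_sqrt_le _ hfl hgl
          _ = (∑ l, f l) * (∑ l, g l) := by
              rw [mul_pow, Real.sq_sqrt (Finset.sum_nonneg fun l _ => hfl l),
                Real.sq_sqrt (Finset.sum_nonneg fun l _ => hgl l)]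
  have hnorm : ∀ k, 1 ≤ k →
      (‖G ^ k‖₊ : ℝ≥0∞) ≤ ((‖S ^ k‖₊ : ℝ≥0∞) * (‖T ^ k‖₊ : ℝ≥0∞)) ^ (1/2 : ℝ) := by
    intro k hk
    refine enn_le_rpow_half ?_
    have hreal : ‖G ^ k‖ ^ 2 ≤ ‖S ^ k‖ * ‖T ^ k‖ :=
      frob_cs (pow_nonneg_entry hG k hk) (pow_nonneg_entry hS k hk)
        (pow_nonneg_entry hT k hk) (claim k hk)
    have hnn : ‖G ^ k‖₊ * ‖G ^ k‖₊ ≤ ‖S ^ k‖₊ * ‖T ^ k‖₊ := by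
      rw [← NNReal.coe_le_coe]
      push_cast
      nlinarith [norm_nonneg (G ^ k)]
    exact_mod_cast ENNReal.coe_le_coe.mpr hnn
  refine specRad_le_of_norm_le hnorm ?_
  have hS_lim := specRad_tendsto S
  have hT_lim := specRad_tendsto T
  have hmul : Tendsto (fun k : ℕ =>
      (‖S ^ k‖₊ : ℝ≥0∞) ^ (1/k : ℝ) * (‖T ^ k‖₊ : ℝ≥0∞) ^ (1/k : ℝ)) atTop
      (𝓝 (specRad S * specRad T)) :=
    ENNReal.Tendsto.mul hS_lim (Or.inr (specRad_ne_top T)) hT_lim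
      (Or.inr (specRad_ne_top S))
  have hlim : Tendsto (fun k : ℕ =>
      (((‖S ^ k‖₊ : ℝ≥0∞) * (‖T ^ k‖₊ : ℝ≥0∞)) ^ (1/2 : ℝ)) ^ (1/k : ℝ)) atTop
      (𝓝 ((specRad S * specRad T) ^ (1/2 : ℝ))) := by
    have heq : (fun k : ℕ =>
        (((‖S ^ k‖₊ : ℝ≥0∞) * (‖T ^ k‖₊ : ℝ≥0∞)) ^ (1/2 : ℝ)) ^ (1/k : ℝ)) =
        fun k : ℕ => ((‖S ^ k‖₊ : ℝ≥0∞) ^ (1/k : ℝ) *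
          (‖T ^ k‖₊ : ℝ≥0∞) ^ (1/k : ℝ)) ^ (1/2 : ℝ) := by
      funext k
      rw [← ENNReal.rpow_mul, mul_comm (1/2 : ℝ), ENNReal.rpow_mul,
        ENNReal.mul_rpow_of_nonneg _ _ (by positivity : (0:ℝ) ≤ 1/k)]
    rw [heq]
    exact (ENNReal.continuous_rpow_const.tendsto _).comp hmul
  have : (specRad S * specRad T) ^ (1/2 : ℝ) = specRad S := by
    rw [hT_def, specRad_transpose, ← sq, ← ENNReal.rpow_two, ← ENNReal.rpow_mul]
    norm_num
  rw [← this]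
  exact hlim

section step1
variable {C D M : Matrix (Fin n) (Fin n) ℝ}

theorem frob_eq_sqrt' (M : Matrix (Fin n) (Fin n) ℝ) :
    ‖M‖ = Real.sqrt (∑ i, ∑ j, M i j ^ 2) := by
  rw [Matrix.frobenius_norm_def, Real.sqrt_eq_rpow]
  congr 1
  refine Finset.sum_congr rfl fun i _ => Finset.sum_congr rfl fun j _ => ?_
  rw [Real.rpow_two, Real.norm_eq_abs, sq_abs]

theorem euclid_le_frob (M : Matrix (Fin n) (Fin n) ℝ) :
    ‖Matrix.toEuclideanCLM (𝕜 := ℝ) M‖ ≤ ‖M‖ := by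
  refine ContinuousLinearMap.opNorm_le_bound _ (norm_nonneg M) fun x => ?_
  set y := Matrix.toEuclideanCLM (𝕜 := ℝ) M x with hy_def
  have hy : ∀ i, y i = ∑ j, M i j * x j := by
    intro i
    show (M.mulVec fun j => x j) i = _
    simp [Matrix.mulVec, dotProduct]
  have hx2 : ∑ j, x j ^ 2 = ‖x‖ ^ 2 := by
    rw [EuclideanSpace.norm_eq, Real.sq_sqrt (by positivity)]
    refine Finset.sum_congr rfl fun j _ => by rw [Real.norm_eq_abs, sq_abs]
  have hxn : 0 ≤ ‖x‖ := norm_nonneg x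
  have key : ‖y‖ ^ 2 ≤ ‖M‖ ^ 2 * ‖x‖ ^ 2 := by
    have hyn : ‖y‖ ^ 2 = ∑ i, y i ^ 2 := by
      rw [EuclideanSpace.norm_eq, Real.sq_sqrt (by positivity)]
      refine Finset.sum_congr rfl fun i _ => by rw [Real.norm_eq_abs, sq_abs]
    rw [hyn, frob_eq_sqrt' M, Real.sq_sqrt (by positivity), Finset.sum_mul]
    refine Finset.sum_le_sum fun i _ => ?_
    rw [hy i]
    calc (∑ j, M i j * x j) ^ 2 ≤ (∑ j, M i j ^ 2) * (∑ j, x j ^ 2) :=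
          Finset.sum_mul_sq_le_sq_mul_sq _ _ _
      _ = (∑ j, M i j ^ 2) * ‖x‖ ^ 2 := by rw [hx2]
  calc ‖y‖ = Real.sqrt (‖y‖ ^ 2) := (Real.sqrt_sq (norm_nonneg y)).symm
    _ ≤ Real.sqrt (‖M‖ ^ 2 * ‖x‖ ^ 2) := Real.sqrt_le_sqrt key
    _ = ‖M‖ * ‖x‖ := by
        rw [← mul_pow, Real.sqrt_sq (by positivity)]

theorem euclid_nnnorm_le_frob (M : Matrix (Fin n) (Fin n) ℝ) :
    ‖Matrix.toEuclideanCLM (𝕜 := ℝ) M‖₊ ≤ ‖M‖₊ := euclid_le_frob M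

theorem star_eq_transpose_real (M : Matrix (Fin n) (Fin n) ℝ) : star M = Mᵀ := by
  ext i j
  simp [Matrix.star_eq_conjTranspose, Matrix.conjTranspose_apply]

/-- C*-identity transported along `toEuclideanCLM`. -/
theorem clm_nnnorm_sq (C : Matrix (Fin n) (Fin n) ℝ) :
    ‖Matrix.toEuclideanCLM (𝕜 := ℝ) C‖₊ * ‖Matrix.toEuclideanCLM (𝕜 := ℝ) C‖₊ =
      ‖Matrix.toEuclideanCLM (𝕜 := ℝ) (Cᵀ * C)‖₊ := by
  rw [_root_.map_mul, ← star_eq_transpose_real, map_star]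
  exact (CStarRing.nnnorm_star_mul_self (x := Matrix.toEuclideanCLM (𝕜 := ℝ) C)).symm

theorem sa_pow_nnnorm {T : EuclideanSpace ℝ (Fin n) →L[ℝ] EuclideanSpace ℝ (Fin n)}
    (hT : star T = T) (m : ℕ) : ‖T ^ (2 ^ m)‖₊ = ‖T‖₊ ^ (2 ^ m) := by
  induction m with
  | zero => simp
  | succ m ih =>
    have h1 : star (T ^ (2 ^ m)) * T ^ (2 ^ m) = T ^ (2 ^ (m + 1)) := by
      rw [star_pow, hT, ← sq, ← pow_mul, ← pow_succ]
    have h2 : ‖star (T ^ 2 ^ m) * T ^ 2 ^ m‖₊ = ‖T ^ 2 ^ m‖₊ * ‖T ^ 2 ^ m‖₊ := by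
      refine NNReal.coe_injective ?_
      push_cast [coe_nnnorm]
      rw [ContinuousLinearMap.star_eq_adjoint, ContinuousLinearMap.mul_def]
      exact ContinuousLinearMap.norm_adjoint_comp_self _
    rw [← h1, h2, ih, ← sq, ← pow_mul, ← pow_succ]

/-- Step 1 core. -/
theorem opNorm_le_specRad (hC : ∀ i j, 0 ≤ C i j) (hD : ∀ i j, (Cᵀ * C) i j ≤ D i j) :
    (‖Matrix.toEuclideanCLM (𝕜 := ℝ) C‖₊ : ℝ≥0∞) ≤ specRad D ^ (1/2 : ℝ) := by
  set S : Matrix (Fin n) (Fin n) ℝ := Cᵀ * C with hS_def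
  have hCt : ∀ i j, 0 ≤ Cᵀ i j := fun i j => hC j i
  have hS : ∀ i j, 0 ≤ S i j := mul_nonneg_entry hCt hC
  set T := Matrix.toEuclideanCLM (𝕜 := ℝ) S with hT_def
  have hTsa : star T = T := by
    rw [hT_def, ← map_star, star_eq_transpose_real, hS_def, Matrix.transpose_mul,
      Matrix.transpose_transpose]
  -- ‖T‖ ≤ specRad S
  have hTle : (‖T‖₊ : ℝ≥0∞) ≤ specRad S := by
    have hpow : Tendsto (fun m : ℕ => (2:ℕ) ^ m) atTop atTop :=
      tendsto_pow_atTop_atTop_of_one_lt (by norm_num)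
    have lim2 : Tendsto (fun m : ℕ => (‖S ^ 2 ^ m‖₊ : ℝ≥0∞) ^ (1 / (2 ^ m : ℕ) : ℝ)) atTop
        (𝓝 (specRad S)) := (specRad_tendsto S).comp hpow
    refine ge_of_tendsto lim2 (Eventually.of_forall fun m => ?_)
    have h1 : ‖T‖₊ ^ (2 ^ m) ≤ ‖S ^ 2 ^ m‖₊ := by
      rw [← sa_pow_nnnorm hTsa m, hT_def, ← map_pow]
      exact euclid_nnnorm_le_frob _
    have h2 : ((‖T‖₊ ^ (2 ^ m) : ℝ≥0) : ℝ≥0∞) ≤ (‖S ^ 2 ^ m‖₊ : ℝ≥0∞) :=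
      ENNReal.coe_le_coe.mpr h1
    have hne : ((2 ^ m : ℕ) : ℝ) ≠ 0 := by positivity
    calc (‖T‖₊ : ℝ≥0∞) = ((‖T‖₊ : ℝ≥0∞) ^ (2 ^ m : ℕ)) ^ (1 / (2 ^ m : ℕ) : ℝ) := by
          rw [← ENNReal.rpow_natCast _ (2 ^ m), ← ENNReal.rpow_mul,
            mul_one_div_cancel hne, ENNReal.rpow_one]
      _ ≤ (‖S ^ 2 ^ m‖₊ : ℝ≥0∞) ^ (1 / (2 ^ m : ℕ) : ℝ) := by
          refine ENNReal.rpow_le_rpow ?_ (by positivity)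
          rw [← ENNReal.coe_pow]
          exact h2
  refine enn_le_rpow_half ?_
  have e1 : (‖Matrix.toEuclideanCLM (𝕜 := ℝ) C‖₊ : ℝ≥0∞) *
      (‖Matrix.toEuclideanCLM (𝕜 := ℝ) C‖₊ : ℝ≥0∞) = (‖T‖₊ : ℝ≥0∞) := by
    rw [← ENNReal.coe_mul, clm_nnnorm_sq]
  rw [e1]
  exact hTle.trans (specRad_mono hS hD)

end step1

/-- Cauchy–Schwarz-type inequality for `α ≥ 1/2`. -/
theorem sum_rpow_mul_rpow_le {ι : Type*} [Fintype ι] (x y : ι → ℝ)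
    (hx : ∀ i, 0 ≤ x i) (hy : ∀ i, 0 ≤ y i) {α : ℝ} (hα : 1/2 ≤ α) :
    ∑ i, x i ^ α * y i ^ α ≤ (∑ i, x i) ^ α * (∑ i, y i) ^ α := by
  have h2α : (1:ℝ) ≤ 2 * α := by linarith
  have sqrt_rpow : ∀ t : ℝ, 0 ≤ t → Real.sqrt (t ^ (2 * α)) = t ^ α := by
    intro t ht
    rw [Real.sqrt_eq_rpow, ← Real.rpow_mul ht, show 2 * α * (1/2) = α by ring]
  calc ∑ i, x i ^ α * y i ^ α
      = ∑ i, Real.sqrt (x i ^ (2 * α)) * Real.sqrt (y i ^ (2 * α)) := by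
        refine Finset.sum_congr rfl fun i _ => ?_
        rw [sqrt_rpow _ (hx i), sqrt_rpow _ (hy i)]
    _ ≤ Real.sqrt (∑ i, x i ^ (2 * α)) * Real.sqrt (∑ i, y i ^ (2 * α)) :=
        Real.sum_sqrt_mul_sqrt_le _ (fun i => Real.rpow_nonneg (hx i) _)
          (fun i => Real.rpow_nonneg (hy i) _)
    _ ≤ Real.sqrt ((∑ i, x i) ^ (2 * α)) * Real.sqrt ((∑ i, y i) ^ (2 * α)) := by
        refine mul_le_mul (Real.sqrt_le_sqrt ?_) (Real.sqrt_le_sqrt ?_)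
          (Real.sqrt_nonneg _) (Real.sqrt_nonneg _)
        · exact sum_rpow_le_my _ _ (fun i _ => hx i) h2α
        · exact sum_rpow_le_my _ _ (fun i _ => hy i) h2α
    _ = (∑ i, x i) ^ α * (∑ i, y i) ^ α := by
        rw [sqrt_rpow _ (Finset.sum_nonneg fun i _ => hx i),
          sqrt_rpow _ (Finset.sum_nonneg fun i _ => hy i)]

end helpers

theorem stmt18 {n : ℕ} (A B : Matrix (Fin n) (Fin n) ℝ)
    (hA : ∀ i j, 0 ≤ A i j) (hB : ∀ i j, 0 ≤ B i j)
    (α : ℝ) (hα : (1:ℝ)/2 ≤ α) :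
    (‖Matrix.toEuclideanCLM (𝕜 := ℝ) (Matrix.of fun i j => (A i j) ^ α * (B i j) ^ α)‖₊ : ℝ≥0∞) ≤
        (specRad (Matrix.of fun i j => ((Aᵀ * B) i j) ^ α * ((Bᵀ * A) i j) ^ α)) ^ ((1:ℝ)/2) ∧
      (specRad (Matrix.of fun i j => ((Aᵀ * B) i j) ^ α * ((Bᵀ * A) i j) ^ α)) ^ ((1:ℝ)/2) ≤
        (specRad (Matrix.of fun i j => ((Aᵀ * B) i j) ^ α * ((Aᵀ * B) i j) ^ α)) ^ ((1:ℝ)/2) ∧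
      (specRad (Matrix.of fun i j => ((Aᵀ * B) i j) ^ α * ((Aᵀ * B) i j) ^ α)) ^ ((1:ℝ)/2) ≤
        specRad (Aᵀ * B) ^ α := by
  have hα0 : (0:ℝ) ≤ α := by linarith
  have hAB : ∀ i j, 0 ≤ (Aᵀ * B) i j := mul_nonneg_entry (fun i j => hA j i) hB
  have hBA : ∀ i j, 0 ≤ (Bᵀ * A) i j := mul_nonneg_entry (fun i j => hB j i) hA
  have hBAt : Bᵀ * A = (Aᵀ * B)ᵀ := by
    rw [Matrix.transpose_mul, Matrix.transpose_transpose]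
  refine ⟨?_, ?_, ?_⟩
  · -- part 1
    set C : Matrix (Fin n) (Fin n) ℝ := Matrix.of fun i j => A i j ^ α * B i j ^ α with hC_def
    have hC : ∀ i j, 0 ≤ C i j := fun i j =>
      mul_nonneg (Real.rpow_nonneg (hA i j) α) (Real.rpow_nonneg (hB i j) α)
    refine opNorm_le_specRad hC fun i j => ?_
    have e1 : (Cᵀ * C) i j = ∑ k, (A k i * B k j) ^ α * (B k i * A k j) ^ α := by
      rw [Matrix.mul_apply]
      refine Finset.sum_congr rfl fun k _ => ?_
      show (A k i ^ α * B k i ^ α) * (A k j ^ α * B k j ^ α) = _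
      rw [Real.mul_rpow (hA k i) (hB k j), Real.mul_rpow (hB k i) (hA k j)]
      ring
    have e2 : (Matrix.of fun i j => ((Aᵀ * B) i j) ^ α * ((Bᵀ * A) i j) ^ α) i j
        = (∑ k, A k i * B k j) ^ α * (∑ k, B k i * A k j) ^ α := by
      show ((Aᵀ * B) i j) ^ α * ((Bᵀ * A) i j) ^ α = _
      rw [Matrix.mul_apply, Matrix.mul_apply]
      rfl
    rw [e1, e2]
    exact sum_rpow_mul_rpow_le _ _ (fun k => mul_nonneg (hA k i) (hB k j))
      (fun k => mul_nonneg (hB k i) (hA k j)) hα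
  · -- part 2
    refine ENNReal.rpow_le_rpow ?_ (by norm_num)
    set X : Matrix (Fin n) (Fin n) ℝ := Matrix.of fun i j => ((Aᵀ * B) i j) ^ α with hX_def
    have hX : ∀ i j, 0 ≤ X i j := fun i j => Real.rpow_nonneg (hAB i j) α
    have e1 : (Matrix.of fun i j => ((Aᵀ * B) i j) ^ α * ((Bᵀ * A) i j) ^ α)
        = Matrix.of fun i j => X i j * X j i := by
      ext i j
      show ((Aᵀ * B) i j) ^ α * ((Bᵀ * A) i j) ^ α = ((Aᵀ * B) i j) ^ α * ((Aᵀ * B) j i) ^ α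
      rw [hBAt]
      rfl
    have e2 : (Matrix.of fun i j => ((Aᵀ * B) i j) ^ α * ((Aᵀ * B) i j) ^ α)
        = Matrix.of fun i j => X i j * X i j := rfl
    rw [e1, e2]
    exact specRad_hadamard_transpose_le hX
  · -- part 3
    have e3 : (Matrix.of fun i j => ((Aᵀ * B) i j) ^ α * ((Aᵀ * B) i j) ^ α)
        = Matrix.of fun i j => ((Aᵀ * B) i j) ^ (2 * α) := by
      ext i j
      show ((Aᵀ * B) i j) ^ α * ((Aᵀ * B) i j) ^ α = ((Aᵀ * B) i j) ^ (2 * α)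
      rw [two_mul, Real.rpow_add_of_nonneg (hAB i j) hα0 hα0]
    rw [e3]
    have h1 : specRad (Matrix.of fun i j => ((Aᵀ * B) i j) ^ (2 * α))
        ≤ specRad (Aᵀ * B) ^ (2 * α) :=
      specRad_entry_rpow_le hAB (by linarith)
    calc (specRad (Matrix.of fun i j => ((Aᵀ * B) i j) ^ (2 * α))) ^ ((1:ℝ)/2)
        ≤ (specRad (Aᵀ * B) ^ (2 * α)) ^ ((1:ℝ)/2) :=
          ENNReal.rpow_le_rpow h1 (by norm_num)
      _ = specRad (Aᵀ * B) ^ α := by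
          rw [← ENNReal.rpow_mul, show 2 * α * ((1:ℝ)/2) = α by ring]
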